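/- Consider a finite stochastic game with states s = 1,…,N and let β ∈ (0,1). Let v(β) ∈ ℝ^N be the unique vector satisfying v_s(β) = val[R_β(s, v(β))] for all s, where R_β(s,u) := [(1−β) r(s,a,b) + β Σ_{s'} p(s'|s,a,b) u_{s'}]_{a,b}. If v_s(β) ≠ 0 for some state s, then the matrix game R_β(s, v(β)) has a square invertible submatrix R̄ such that v_s(β) = det(R̄) / (Σ_{i,j} R̄^{ij}), where R̄^{ij} denotes the (i,j)-th cofactor of R̄. -/

import Mathlib

open Matrix

/-- The payoff `xᵀ A y` of the zero-sum matrix game `A` under mixed strategies `x`, `y`. -/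
noncomputable def payoff {m n : ℕ} (A : Matrix (Fin m) (Fin n) ℝ)
    (x : Fin m → ℝ) (y : Fin n → ℝ) : ℝ := x ⬝ᵥ A.mulVec y

/-- The value `val(A) = max_{x ∈ Δ_m} min_{y ∈ Δ_n} xᵀ A y` of the matrix game `A`. -/
noncomputable def matrixVal {m n : ℕ} (A : Matrix (Fin m) (Fin n) ℝ) : ℝ :=
  ⨆ x : stdSimplex ℝ (Fin m), ⨅ y : stdSimplex ℝ (Fin n), payoff A x.1 y.1

/-- The auxiliary Shapley matrix game
`R_β(s,u) = [(1−β) r(s,a,b) + β Σ_{s'} p(s'|s,a,b) u_{s'}]_{a,b}`. -/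
noncomputable def shapleyMatrix {N : ℕ} {m n : Fin N → ℕ}
    (r : (s : Fin N) → Fin (m s) → Fin (n s) → ℝ)
    (p : (s : Fin N) → Fin (m s) → Fin (n s) → Fin N → ℝ)
    (β : ℝ) (s : Fin N) (u : Fin N → ℝ) : Matrix (Fin (m s)) (Fin (n s)) ℝ :=
  Matrix.of fun a b => (1 - β) * r s a b + β * ∑ s', p s a b s' * u s'

namespace SSAux

variable {m n : ℕ}

lemma payoff_eq (A : Matrix (Fin m) (Fin n) ℝ) (x : Fin m → ℝ) (y : Fin n → ℝ) :
    payoff A x y = ∑ j, vecMul x A j * y j := by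
  rw [payoff, Matrix.dotProduct_mulVec]; rfl

lemma inf'_le_payoff {A : Matrix (Fin m) (Fin n) ℝ} {x : Fin m → ℝ}
    (hne : (Finset.univ : Finset (Fin n)).Nonempty)
    {y : Fin n → ℝ} (hy : y ∈ stdSimplex ℝ (Fin n)) :
    (Finset.univ.inf' hne fun j => vecMul x A j) ≤ payoff A x y := by
  set c := Finset.univ.inf' hne fun j => vecMul x A j with hc
  have h1 : ∑ j, c * y j ≤ ∑ j, vecMul x A j * y j := by
    refine Finset.sum_le_sum fun j _ => ?_
    exact mul_le_mul_of_nonneg_right (Finset.inf'_le _ (Finset.mem_univ j)) (hy.1 j)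
  calc c = c * ∑ j, y j := by rw [hy.2, mul_one]
    _ = ∑ j, c * y j := by rw [Finset.mul_sum]
    _ ≤ ∑ j, vecMul x A j * y j := h1
    _ = payoff A x y := (payoff_eq A x y).symm

lemma payoff_single (A : Matrix (Fin m) (Fin n) ℝ) (x : Fin m → ℝ) (j : Fin n) :
    payoff A x (Pi.single j 1) = vecMul x A j := by
  rw [payoff_eq]
  simp [Pi.single_apply]

lemma iInf_payoff_eq {A : Matrix (Fin m) (Fin n) ℝ}
    (hne : (Finset.univ : Finset (Fin n)).Nonempty) (x : Fin m → ℝ) :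
    ⨅ y : stdSimplex ℝ (Fin n), payoff A x y.1
      = Finset.univ.inf' hne fun j => vecMul x A j := by
  haveI : Nonempty (stdSimplex ℝ (Fin n)) := ⟨⟨_, single_mem_stdSimplex ℝ hne.choose⟩⟩
  set c := Finset.univ.inf' hne fun j => vecMul x A j with hc
  refine le_antisymm ?_ (le_ciInf fun y => inf'_le_payoff hne y.2)
  obtain ⟨j0, -, hj0⟩ := Finset.exists_mem_eq_inf' hne fun j => vecMul x A j
  have hmem : (Pi.single j0 1 : Fin n → ℝ) ∈ stdSimplex ℝ (Fin n) :=
    single_mem_stdSimplex ℝ j0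
  have h2 : ⨅ y : stdSimplex ℝ (Fin n), payoff A x y.1
      ≤ payoff A x ((⟨_, hmem⟩ : stdSimplex ℝ (Fin n)) : Fin n → ℝ) := by
    refine ciInf_le ⟨c, ?_⟩ _
    rintro r ⟨y, rfl⟩
    exact inf'_le_payoff hne y.2
  change _ ≤ payoff A x (Pi.single j0 1) at h2
  rw [payoff_single] at h2
  rw [hc, hj0]
  exact h2

lemma continuous_vecMul (A : Matrix (Fin m) (Fin n) ℝ) (j : Fin n) :
    Continuous fun x : Fin m → ℝ => vecMul x A j := by
  simp only [vecMul, dotProduct]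
  exact continuous_finset_sum _ fun i _ => (continuous_apply i).mul continuous_const

lemma exists_x_optimal (hm : 0 < m) (hn : 0 < n) (A : Matrix (Fin m) (Fin n) ℝ) :
    (∃ x ∈ stdSimplex ℝ (Fin m), ∀ j, matrixVal A ≤ vecMul x A j)
      ∧ BddAbove (Set.range fun x : stdSimplex ℝ (Fin m) =>
          ⨅ y : stdSimplex ℝ (Fin n), payoff A x.1 y.1) := by
  haveI : Nonempty (Fin m) := Fin.pos_iff_nonempty.mp hm
  haveI : Nonempty (Fin n) := Fin.pos_iff_nonempty.mp hn
  have hne : (Finset.univ : Finset (Fin n)).Nonempty := Finset.univ_nonempty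
  set f : (Fin m → ℝ) → ℝ := fun x => Finset.univ.inf' hne fun j => vecMul x A j with hf
  have hcont : Continuous f :=
    Continuous.finset_inf'_apply hne fun j _ => continuous_vecMul A j
  have hsne : (stdSimplex ℝ (Fin m)).Nonempty :=
    ⟨_, single_mem_stdSimplex ℝ (Classical.arbitrary _)⟩
  obtain ⟨xs, hxs, hmax⟩ :=
    (isCompact_stdSimplex ℝ (Fin m)).exists_isMaxOn hsne hcont.continuousOn
  have hbdd : BddAbove (Set.range fun x : stdSimplex ℝ (Fin m) =>
      ⨅ y : stdSimplex ℝ (Fin n), payoff A x.1 y.1) := by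
    refine ⟨f xs, ?_⟩
    rintro r ⟨x, rfl⟩
    show (⨅ y : stdSimplex ℝ (Fin n), payoff A x.1 y.1) ≤ f xs
    rw [iInf_payoff_eq hne]
    exact hmax x.2
  have hval : matrixVal A = f xs := by
    refine le_antisymm ?_ ?_
    · haveI : Nonempty (stdSimplex ℝ (Fin m)) := ⟨⟨_, hxs⟩⟩
      refine ciSup_le fun x => ?_
      show (⨅ y : stdSimplex ℝ (Fin n), payoff A x.1 y.1) ≤ f xs
      rw [iInf_payoff_eq hne]
      exact hmax x.2
    · have h3 := le_ciSup hbdd (⟨xs, hxs⟩ : stdSimplex ℝ (Fin m))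
      rw [iInf_payoff_eq hne] at h3
      exact h3
  refine ⟨⟨xs, hxs, fun j => ?_⟩, hbdd⟩
  rw [hval]
  exact Finset.inf'_le _ (Finset.mem_univ j)


variable {m n : ℕ}

lemma alternative (hn : 0 < n) (A : Matrix (Fin m) (Fin n) ℝ) (t : ℝ)
    (h : ∀ y ∈ stdSimplex ℝ (Fin n), ∃ i, t < A.mulVec y i) :
    ∃ x ∈ stdSimplex ℝ (Fin m), ∀ j, t < vecMul x A j := by
  haveI : Nonempty (Fin n) := Fin.pos_iff_nonempty.mp hn
  classical
  set c : Fin m → ℝ := fun _ => t with hcdef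
  set C : Set (Fin m → ℝ) := (fun u => -c + u) '' (A.mulVecLin '' stdSimplex ℝ (Fin n)) with hC
  set D : Set (Fin m → ℝ) := Set.pi Set.univ (fun _ => Set.Iic (0 : ℝ)) with hD
  have hCconv : Convex ℝ C :=
    ((convex_stdSimplex ℝ (Fin n)).linear_image A.mulVecLin).translate (-c)
  have hCcomp : IsCompact C := by
    refine IsCompact.image (IsCompact.image (isCompact_stdSimplex ℝ (Fin n)) ?_) ?_
    · exact A.mulVecLin.continuous_of_finiteDimensional
    · exact continuous_const.add continuous_id
  have hDconv : Convex ℝ D := convex_pi fun _ _ => convex_Iic 0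
  have hDclosed : IsClosed D := isClosed_set_pi fun _ _ => isClosed_Iic
  have hdisj : Disjoint C D := by
    rw [Set.disjoint_left]
    rintro u ⟨w, ⟨y, hy, rfl⟩, rfl⟩ hu
    obtain ⟨i, hi⟩ := h y hy
    have h4 := hu i (Set.mem_univ i)
    simp only [Set.mem_Iic, Pi.add_apply, Pi.neg_apply, hcdef] at h4
    have h5 : A.mulVecLin y i ≤ t := by linarith
    rw [Matrix.mulVecLin_apply] at h5
    exact absurd hi (not_lt.2 h5)
  obtain ⟨f, u, v, hfC, huv, hfD⟩ :=
    geometric_hahn_banach_compact_closed hCconv hCcomp hDconv hDclosed hdisj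
  have h0D : (0 : Fin m → ℝ) ∈ D := by intro i _; simp
  have hv0 : v < 0 := by simpa using hfD 0 h0D
  have hu0 : u < 0 := huv.trans hv0
  -- the separating functional has nonpositive coefficients
  have hx0 : ∀ i, f (Pi.single i 1) ≤ 0 := by
    intro i
    by_contra hpos
    push_neg at hpos
    set s : ℝ := (1 - v) / f (Pi.single i 1) with hs
    have hs0 : 0 < s := div_pos (by linarith) hpos
    have hmem : ((-s) • (Pi.single i (1:ℝ) : Fin m → ℝ)) ∈ D := by
      intro k _
      simp only [Pi.smul_apply, Pi.single_apply, smul_eq_mul, Set.mem_Iic]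
      rcases eq_or_ne k i with rfl | hk
      · simp; positivity
      · simp [hk]
    have := hfD _ hmem
    rw [_root_.map_smul, smul_eq_mul, hs, neg_mul, div_mul_cancel₀ _ (ne_of_gt hpos)] at this
    linarith
  set x0 : Fin m → ℝ := fun i => -f (Pi.single i 1) with hx0def
  have hx0nn : ∀ i, 0 ≤ x0 i := fun i => neg_nonneg.2 (hx0 i)
  have hfw : ∀ w : Fin m → ℝ, f w = -∑ i, w i * x0 i := by
    intro w
    have hw : w = ∑ i, w i • (Pi.single i (1:ℝ) : Fin m → ℝ) := by
      ext k; simp [Pi.single_apply]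
    calc f w = f (∑ i, w i • (Pi.single i (1:ℝ) : Fin m → ℝ)) := by rw [← hw]
      _ = ∑ i, w i * f ((Pi.single i (1:ℝ) : Fin m → ℝ)) := by rw [map_sum]; simp
      _ = -∑ i, w i * x0 i := by
          rw [← Finset.sum_neg_distrib]
          refine Finset.sum_congr rfl fun i _ => ?_
          simp [hx0def]
  -- key inequality on the simplex image
  have hkey : ∀ y ∈ stdSimplex ℝ (Fin n), t * ∑ i, x0 i < ∑ i, x0 i * A.mulVec y i := by
    intro y hy
    have hmemC : -c + A.mulVecLin y ∈ C := ⟨A.mulVecLin y, ⟨y, hy, rfl⟩, rfl⟩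
    have h1 : f (-c + A.mulVecLin y) < 0 := (hfC _ hmemC).trans hu0
    rw [hfw] at h1
    have h2 : 0 < ∑ i, (-c + A.mulVecLin y) i * x0 i := by linarith
    have h3 : ∑ i, (-c + A.mulVecLin y) i * x0 i
        = (∑ i, x0 i * A.mulVec y i) - t * ∑ i, x0 i := by
      rw [Finset.mul_sum, ← Finset.sum_sub_distrib]
      refine Finset.sum_congr rfl fun i _ => ?_
      simp only [Pi.add_apply, Pi.neg_apply, hcdef, Matrix.mulVecLin_apply]
      ring
    rw [h3] at h2
    linarith
  set S : ℝ := ∑ i, x0 i with hS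
  have hSpos : 0 < S := by
    rcases (Finset.sum_nonneg fun i _ => hx0nn i).lt_or_eq with hlt | heq
    · exact hlt
    · exfalso
      obtain ⟨y0, hy0⟩ : (stdSimplex ℝ (Fin n)).Nonempty :=
        ⟨_, single_mem_stdSimplex ℝ (Classical.arbitrary _)⟩
      have := hkey y0 hy0
      have hzero : ∀ i, x0 i = 0 := by
        intro i
        have := (Finset.sum_eq_zero_iff_of_nonneg (fun i _ => hx0nn i)).1 heq.symm i
          (Finset.mem_univ i)
        exact this
      simp only [hzero, zero_mul, Finset.sum_const_zero] at this
      have hS0 : S = 0 := by rw [hS, ← heq]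
      rw [hS0, mul_zero] at this
      exact lt_irrefl 0 this
  refine ⟨S⁻¹ • x0, ⟨fun i => by
      simp only [Pi.smul_apply, smul_eq_mul]
      exact mul_nonneg (inv_nonneg.2 hSpos.le) (hx0nn i), ?_⟩, fun j => ?_⟩
  · simp only [Pi.smul_apply, smul_eq_mul, ← Finset.mul_sum, ← hS]
    field_simp
  · have := hkey (Pi.single j 1) (single_mem_stdSimplex ℝ j)
    have hmv : ∀ i, A.mulVec (Pi.single j 1) i = A i j := by
      intro i
      simp [Matrix.mulVec_single]
    simp only [hmv] at this
    have hvm : vecMul (S⁻¹ • x0) A j = S⁻¹ * ∑ i, x0 i * A i j := by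
      simp only [vecMul, dotProduct, Pi.smul_apply, smul_eq_mul, Finset.mul_sum]
      exact Finset.sum_congr rfl fun i _ => by simp only [hx0def]; ring
    rw [hvm]
    rw [lt_inv_mul_iff₀ hSpos]
    calc S * t = t * S := by ring
      _ < ∑ i, x0 i * A i j := this

lemma continuous_mulVec (A : Matrix (Fin m) (Fin n) ℝ) (i : Fin m) :
    Continuous fun y : Fin n → ℝ => A.mulVec y i := by
  simp only [mulVec, dotProduct]
  exact continuous_finset_sum _ fun j _ => continuous_const.mul (continuous_apply j)

lemma exists_y_optimal (hm : 0 < m) (hn : 0 < n) (A : Matrix (Fin m) (Fin n) ℝ) :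
    ∃ y ∈ stdSimplex ℝ (Fin n), ∀ i, A.mulVec y i ≤ matrixVal A := by
  haveI : Nonempty (Fin m) := Fin.pos_iff_nonempty.mp hm
  haveI : Nonempty (Fin n) := Fin.pos_iff_nonempty.mp hn
  have hneM : (Finset.univ : Finset (Fin m)).Nonempty := Finset.univ_nonempty
  set g : (Fin n → ℝ) → ℝ := fun y => Finset.univ.sup' hneM fun i => A.mulVec y i with hg
  have hcont : Continuous g :=
    Continuous.finset_sup'_apply hneM fun i _ => continuous_mulVec A i
  have hsne : (stdSimplex ℝ (Fin n)).Nonempty :=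
    ⟨_, single_mem_stdSimplex ℝ (Classical.arbitrary _)⟩
  obtain ⟨ys, hys, hmin⟩ :=
    (isCompact_stdSimplex ℝ (Fin n)).exists_isMinOn hsne hcont.continuousOn
  refine ⟨ys, hys, fun i => ?_⟩
  have hgle : g ys ≤ matrixVal A := by
    by_contra hlt
    push_neg at hlt
    obtain ⟨t, ht1, ht2⟩ := exists_between hlt
    have halt : ∀ y ∈ stdSimplex ℝ (Fin n), ∃ i, t < A.mulVec y i := by
      intro y hy
      by_contra hno
      push_neg at hno
      have : g y ≤ t := Finset.sup'_le _ _ fun i _ => hno i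
      exact absurd (hmin hy) (not_le.2 (lt_of_le_of_lt this ht2))
    obtain ⟨x, hx, hxj⟩ := alternative hn A t halt
    have hbdd := (exists_x_optimal hm hn A).2
    have hle : t ≤ ⨅ y : stdSimplex ℝ (Fin n), payoff A x y.1 := by
      rw [iInf_payoff_eq Finset.univ_nonempty]
      exact Finset.le_inf' _ _ fun j _ => (hxj j).le
    have hfin : (⨅ y : stdSimplex ℝ (Fin n), payoff A x y.1) ≤ matrixVal A :=
      le_ciSup hbdd (⟨x, hx⟩ : stdSimplex ℝ (Fin m))
    have : t ≤ matrixVal A := le_trans hle hfin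
    exact absurd this (not_le.2 ht1)
  exact le_trans (Finset.le_sup' _ (Finset.mem_univ i)) hgle


lemma exists_cols_isUnit {ι κ : Type*} [Fintype ι] [Fintype κ] [DecidableEq ι]
    [DecidableEq κ] (M : Matrix ι κ ℝ) (h : LinearIndependent ℝ (fun i => M i)) :
    ∃ τ : ι → κ, Function.Injective τ ∧ IsUnit (M.submatrix id τ).det := by
  classical
  have hrank : Mᵀ.rank = Fintype.card ι := by
    rw [Matrix.rank_eq_finrank_span_cols]
    exact finrank_span_eq_card h
  have hspan : Submodule.span ℝ (Set.range Mᵀ) = ⊤ := by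
    apply Submodule.eq_top_of_finrank_eq
    show Module.finrank ℝ (Submodule.span ℝ (Set.range M.col)) = _
    rw [← Matrix.rank_eq_finrank_span_cols, ← Matrix.rank_transpose M, hrank, Module.finrank_pi]
  obtain ⟨b, hbsub, hbspan, hbli⟩ := exists_linearIndependent ℝ (Set.range Mᵀ)
  rw [hspan] at hbspan
  have hbfin : b.Finite := hbli.finite
  haveI := hbfin.fintype
  let B : Module.Basis b ℝ (ι → ℝ) := Module.Basis.mk hbli (by rw [Subtype.range_coe, hbspan])
  have hcard : Fintype.card ι = Fintype.card b := by
    rw [← Module.finrank_eq_card_basis B, Module.finrank_pi]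
  let e : ι ≃ b := Fintype.equivOfCardEq hcard
  choose g hgspec using fun v : b => hbsub v.2
  refine ⟨fun i => g (e i), ?_, ?_⟩
  · intro i1 i2 h12
    have : ((e i1 : (ι → ℝ))) = (e i2 : (ι → ℝ)) := by
      rw [← hgspec (e i1), ← hgspec (e i2)]
      exact congrArg Mᵀ h12
    exact e.injective (Subtype.ext this)
  · rw [← Matrix.isUnit_iff_isUnit_det]
    rw [← Matrix.linearIndependent_cols_iff_isUnit]
    have hcols : (fun i => (M.submatrix id fun i => g (e i))ᵀ i)
        = fun i => ((e i : (ι → ℝ))) := by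
      funext i
      rw [← hgspec (e i)]
      rfl
    show LinearIndependent ℝ (fun i => (M.submatrix id fun i => g (e i))ᵀ i)
    rw [hcols]
    exact hbli.comp e e.injective

lemma vecMul_add_smul' (A : Matrix (Fin m) (Fin n) ℝ) (z w : Fin m → ℝ) (ε : ℝ) (j : Fin n) :
    vecMul (z + ε • w) A j = vecMul z A j + ε * vecMul w A j := by
  simp only [vecMul, dotProduct, Pi.add_apply, Pi.smul_apply, smul_eq_mul, add_mul,
    Finset.sum_add_distrib, Finset.mul_sum, mul_assoc]

lemma vecMul_sub_smul' (A : Matrix (Fin m) (Fin n) ℝ) (z w : Fin m → ℝ) (ε : ℝ) (j : Fin n) :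
    vecMul (z - ε • w) A j = vecMul z A j - ε * vecMul w A j := by
  simp only [vecMul, dotProduct, Pi.sub_apply, Pi.smul_apply, smul_eq_mul, sub_mul,
    Finset.sum_sub_distrib, Finset.mul_sum, mul_assoc]

lemma vecMul_smul'' (A : Matrix (Fin m) (Fin n) ℝ) (w : Fin m → ℝ) (ε : ℝ) (j : Fin n) :
    vecMul (ε • w) A j = ε * vecMul w A j := by
  simp only [vecMul, dotProduct, Pi.smul_apply, smul_eq_mul, Finset.mul_sum, mul_assoc]

lemma kernel_of_pos {v : ℝ} (hv : 0 < v) (A : Matrix (Fin m) (Fin n) ℝ)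
    {x : Fin m → ℝ} (hx : x ∈ stdSimplex ℝ (Fin m)) (hxA : ∀ j, v ≤ vecMul x A j)
    {y : Fin n → ℝ} (hy : y ∈ stdSimplex ℝ (Fin n)) (hAy : ∀ i, A.mulVec y i ≤ v) :
    ∃ (k : ℕ) (_ : 0 < k) (ρ : Fin k → Fin m) (σ : Fin k → Fin n),
      Function.Injective ρ ∧ Function.Injective σ ∧
      IsUnit (A.submatrix ρ σ).det ∧
      v = (A.submatrix ρ σ).det / (∑ i, ∑ j, (A.submatrix ρ σ).adjugate j i) := by
  classical
  set G : Set (Fin m → ℝ) :=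
    {z | (∀ i, 0 ≤ z i) ∧ (∀ j, 1 ≤ vecMul z A j) ∧ ∑ i, z i = 1/v} with hG
  -- the scaled optimal strategy belongs to G
  have hz0 : v⁻¹ • x ∈ G := by
    refine ⟨fun i => mul_nonneg (inv_nonneg.2 hv.le) (hx.1 i), fun j => ?_, ?_⟩
    · rw [vecMul_smul'']
      rw [← inv_mul_cancel₀ (ne_of_gt hv)]
      exact mul_le_mul_of_nonneg_left (hxA j) (inv_nonneg.2 hv.le)
    · simp only [Pi.smul_apply, smul_eq_mul, ← Finset.mul_sum, hx.2, mul_one, one_div]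
  -- key inequality: any feasible z has mass at least 1/v
  have hkey : ∀ z : Fin m → ℝ, (∀ i, 0 ≤ z i) → (∀ j, 1 ≤ vecMul z A j) →
      1/v ≤ ∑ i, z i := by
    intro z hz1 hz2
    have h1 : (1:ℝ) ≤ ∑ j, vecMul z A j * y j := by
      calc (1:ℝ) = ∑ j, y j := hy.2.symm
        _ ≤ ∑ j, vecMul z A j * y j := by
            refine Finset.sum_le_sum fun j _ => ?_
            nlinarith [hz2 j, hy.1 j]
    have h2 : ∑ j, vecMul z A j * y j = ∑ i, z i * A.mulVec y i := by
      rw [show (∑ j, vecMul z A j * y j) = vecMul z A ⬝ᵥ y from rfl,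
        ← Matrix.dotProduct_mulVec]
      rfl
    have h3 : ∑ i, z i * A.mulVec y i ≤ v * ∑ i, z i := by
      rw [Finset.mul_sum]
      refine Finset.sum_le_sum fun i _ => ?_
      nlinarith [hz1 i, hAy i]
    rw [div_le_iff₀ hv]
    nlinarith
  -- G is convex
  have hGconv : Convex ℝ G := by
    rintro z1 ⟨h11, h12, h13⟩ z2 ⟨h21, h22, h23⟩ a b ha hb hab
    refine ⟨fun i => by
      simp only [Pi.add_apply, Pi.smul_apply, smul_eq_mul]
      have := h11 i; have := h21 i; positivity, fun j => ?_, ?_⟩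
    · have hcombo := vecMul_add_smul' A (a • z1) z2 b j
      rw [vecMul_smul''] at hcombo
      rw [hcombo]
      nlinarith [h12 j, h22 j]
    · simp only [Pi.add_apply, Pi.smul_apply, smul_eq_mul, Finset.sum_add_distrib,
        ← Finset.mul_sum, h13, h23]
      field_simp
      linarith
  -- G is compact
  have hGclosed : IsClosed G := by
    have c1 : IsClosed {z : Fin m → ℝ | ∀ i, 0 ≤ z i} := by
      have he : {z : Fin m → ℝ | ∀ i, 0 ≤ z i} = ⋂ i, {z | 0 ≤ z i} := by
        ext; simp [Set.mem_iInter]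
      rw [he]
      exact isClosed_iInter fun i => isClosed_le continuous_const (continuous_apply i)
    have c2 : IsClosed {z : Fin m → ℝ | ∀ j, 1 ≤ vecMul z A j} := by
      have he : {z : Fin m → ℝ | ∀ j, 1 ≤ vecMul z A j} = ⋂ j, {z | 1 ≤ vecMul z A j} := by
        ext; simp [Set.mem_iInter]
      rw [he]
      refine isClosed_iInter fun j => isClosed_le continuous_const ?_
      simp only [vecMul, dotProduct]
      exact continuous_finset_sum _ fun i _ => (continuous_apply i).mul continuous_const
    have c3 : IsClosed {z : Fin m → ℝ | ∑ i, z i = 1/v} :=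
      isClosed_eq (continuous_finset_sum _ fun i _ => continuous_apply i) continuous_const
    have : G = {z | ∀ i, 0 ≤ z i} ∩ ({z | ∀ j, 1 ≤ vecMul z A j} ∩ {z | ∑ i, z i = 1/v}) := by
      ext z; simp [hG, Set.mem_setOf_eq, and_assoc]
    rw [this]
    exact c1.inter (c2.inter c3)
  have hGcomp : IsCompact G := by
    have hpi : IsCompact (Set.pi Set.univ fun _ : Fin m => Set.Icc (0:ℝ) (1/v)) :=
      isCompact_univ_pi fun _ => isCompact_Icc
    refine IsCompact.of_isClosed_subset hpi hGclosed ?_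
    rintro z ⟨hz1, hz2, hz3⟩ i _
    refine Set.mem_Icc.2 ⟨hz1 i, ?_⟩
    rw [← hz3]
    exact Finset.single_le_sum (fun i _ => hz1 i) (Finset.mem_univ i)
  -- take an extreme point of G
  obtain ⟨z, hzG, hzext⟩ := hGcomp.extremePoints_nonempty ⟨_, hz0⟩
  obtain ⟨hznn, hzA, hzsum⟩ := hzG
  set I : Finset (Fin m) := Finset.univ.filter (fun i => z i ≠ 0) with hI
  set J : Finset (Fin n) := Finset.univ.filter (fun j => vecMul z A j = 1) with hJ
  have hIne : I.Nonempty := by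
    by_contra hc
    rw [Finset.not_nonempty_iff_eq_empty] at hc
    have hall : ∀ i, z i = 0 := by
      intro i
      by_contra hzi
      have : i ∈ I := by simp [hI, hzi]
      simp [hc] at this
    rw [Finset.sum_congr rfl fun i _ => hall i, Finset.sum_const_zero] at hzsum
    have : v * 0 = v * (1/v) := by rw [hzsum]
    rw [mul_zero, mul_one_div, div_self (ne_of_gt hv)] at this
    norm_num at this
  have hne_m : (Finset.univ : Finset (Fin m)).Nonempty := ⟨hIne.choose, Finset.mem_univ _⟩
  have hne_n : (Finset.univ : Finset (Fin n)).Nonempty := by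
    by_contra hc
    rw [Finset.not_nonempty_iff_eq_empty] at hc
    have := hy.2
    rw [hc] at this
    simp at this
  -- rows of the (I, J) submatrix are linearly independent
  have hli : LinearIndependent ℝ
      (fun i : {i // i ∈ I} => (fun j : {j // j ∈ J} => A i.1 j.1)) := by
    rw [Fintype.linearIndependent_iff]
    intro c hc
    set w : Fin m → ℝ := fun i => if h : i ∈ I then c ⟨i, h⟩ else 0 with hw
    have hwsupp : ∀ i, i ∉ I → w i = 0 := fun i hi => dif_neg hi
    have hwA : ∀ j ∈ J, vecMul w A j = 0 := by
      intro j hj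
      have e1 : vecMul w A j = ∑ i ∈ I, w i * A i j := by
        rw [show vecMul w A j = ∑ i, w i * A i j from rfl]
        exact (Finset.sum_subset (Finset.subset_univ I)
          (fun i _ hi => by rw [hwsupp i hi, zero_mul])).symm
      have e2 : ∑ i ∈ I, w i * A i j = ∑ i : {i // i ∈ I}, c i * A i.1 j := by
        rw [← Finset.sum_coe_sort I (fun i => w i * A i j)]
        refine Finset.sum_congr rfl fun i _ => ?_
        rw [hw]
        simp [dif_pos i.2]
      have e3 : ∑ i : {i // i ∈ I}, c i * A i.1 j = 0 := by
        have := congrFun hc ⟨j, hj⟩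
        simpa using this
      rw [e1, e2, e3]
    have hw0 : w = 0 := by
      by_contra hwne
      -- construct the perturbation size ε
      set εa : ℝ := Finset.univ.inf' hne_m
        (fun i => if i ∈ I then z i / (|w i| + 1) else 1) with hεa
      set εb : ℝ := Finset.univ.inf' hne_n
        (fun j => if j ∈ J then 1 else (vecMul z A j - 1) / (|vecMul w A j| + 1)) with hεb
      set ε : ℝ := min εa εb with hε
      have hIpos : ∀ i, i ∈ I → 0 < z i := by
        intro i hi
        rcases (hznn i).lt_or_eq with h | h
        · exact h
        · exfalso; simp [hI, ← h] at hi
      have hJgt : ∀ j, j ∉ J → 1 < vecMul z A j := by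
        intro j hj
        rcases (hzA j).lt_or_eq with h | h
        · exact h
        · exfalso; simp [hJ, ← h] at hj
      have hεpos : 0 < ε := by
        rw [hε, lt_min_iff]
        constructor
        · rw [hεa, Finset.lt_inf'_iff]
          intro i _
          by_cases hi : i ∈ I
          · simp only [if_pos hi]
            exact div_pos (hIpos i hi) (by positivity)
          · simp only [if_neg hi]; norm_num
        · rw [hεb, Finset.lt_inf'_iff]
          intro j _
          by_cases hj : j ∈ J
          · simp only [if_pos hj]; norm_num
          · simp only [if_neg hj]
            exact div_pos (by linarith [hJgt j hj]) (by positivity)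
      -- bounds from ε
      have hbound1 : ∀ i, ε * |w i| ≤ z i ∨ w i = 0 := by
        intro i
        by_cases hi : i ∈ I
        · left
          have h1 : ε ≤ z i / (|w i| + 1) := by
            refine le_trans (min_le_left _ _) ?_
            refine le_trans (Finset.inf'_le _ (Finset.mem_univ i)) ?_
            rw [if_pos hi]
          have h2 : ε * (|w i| + 1) ≤ z i := by
            rw [← div_mul_cancel₀ (z i) (show |w i| + 1 ≠ 0 by positivity)]
            exact mul_le_mul_of_nonneg_right h1 (by positivity)
          nlinarith [hεpos]
        · right; exact hwsupp i hi
      have hbound2 : ∀ j, j ∉ J → ε * |vecMul w A j| ≤ vecMul z A j - 1 := by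
        intro j hj
        have h1 : ε ≤ (vecMul z A j - 1) / (|vecMul w A j| + 1) := by
          refine le_trans (min_le_right _ _) ?_
          refine le_trans (Finset.inf'_le _ (Finset.mem_univ j)) ?_
          rw [if_neg hj]
        have h2 : ε * (|vecMul w A j| + 1) ≤ vecMul z A j - 1 := by
          rw [← div_mul_cancel₀ (vecMul z A j - 1) (show |vecMul w A j| + 1 ≠ 0 by positivity)]
          exact mul_le_mul_of_nonneg_right h1 (by positivity)
        nlinarith [hεpos]
      -- both perturbations are feasible
      have hfeas : ∀ s : ℝ, s = ε ∨ s = -ε →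
          (∀ i, 0 ≤ z i + s * w i) ∧ (∀ j, 1 ≤ vecMul (z + s • w) A j) := by
        intro s hs
        have habs : |s| = ε := by rcases hs with rfl | rfl <;> simp [abs_of_pos hεpos, hεpos.le]
        constructor
        · intro i
          rcases hbound1 i with h | h
          · have : |s * w i| ≤ z i := by rw [abs_mul, habs]; exact h
            have := neg_le_of_abs_le this
            linarith
          · rw [h, mul_zero, add_zero]; exact hznn i
        · intro j
          rw [vecMul_add_smul']
          by_cases hj : j ∈ J
          · have : vecMul w A j = 0 := hwA j hj
            rw [this, mul_zero, add_zero]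
            exact hzA j
          · have h1 := hbound2 j hj
            have : |s * vecMul w A j| ≤ vecMul z A j - 1 := by
              rw [abs_mul, habs]; exact h1
            have := neg_le_of_abs_le this
            linarith
      obtain ⟨hp1, hp2⟩ := hfeas ε (Or.inl rfl)
      obtain ⟨hm1, hm2⟩ := hfeas (-ε) (Or.inr rfl)
      -- mass of w is zero, so both perturbations are in G
      have hsum1 : ∑ i, (z + ε • w) i = 1/v + ε * ∑ i, w i := by
        simp only [Pi.add_apply, Pi.smul_apply, smul_eq_mul, Finset.sum_add_distrib,
          ← Finset.mul_sum, hzsum]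
      have hsum2 : ∑ i, (z + (-ε) • w) i = 1/v - ε * ∑ i, w i := by
        simp only [Pi.add_apply, Pi.smul_apply, smul_eq_mul, Finset.sum_add_distrib,
          ← Finset.mul_sum, hzsum]
        ring
      have hk1 := hkey (z + ε • w) (fun i => by simpa using hp1 i) hp2
      have hk2 := hkey (z + (-ε) • w) (fun i => by simpa [neg_mul] using hm1 i) hm2
      rw [hsum1] at hk1
      rw [hsum2] at hk2
      have hwsum : ε * ∑ i, w i = 0 := by linarith
      have hzp : z + ε • w ∈ G := ⟨fun i => by simpa using hp1 i, hp2, by rw [hsum1, hwsum]; ring⟩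
      have hzm : z + (-ε) • w ∈ G := ⟨fun i => by simpa [neg_mul] using hm1 i, hm2,
        by rw [hsum2, hwsum]; ring⟩
      have hseg : z ∈ openSegment ℝ (z + ε • w) (z + (-ε) • w) := by
        refine ⟨1/2, 1/2, by norm_num, by norm_num, by norm_num, ?_⟩
        ext i
        simp only [Pi.add_apply, Pi.smul_apply, smul_eq_mul]
        ring
      have h7 := hzext hzp hzm hseg
      have hεw : ε • w = 0 := by
        have h5 : z + ε • w = z := h7
        have h6 : ε • w = (z + ε • w) - z := by rw [add_sub_cancel_left]
        rw [h6, h5, sub_self]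
      exact hwne (by
        have := smul_eq_zero.1 hεw
        rcases this with h | h
        · exact absurd h (ne_of_gt hεpos)
        · exact h)
    intro i
    have : w i.1 = c i := by rw [hw]; simp [dif_pos i.2]
    rw [← this, hw0]
    rfl
  -- select columns to obtain an invertible square submatrix
  obtain ⟨τ, hτinj, hτdet⟩ := exists_cols_isUnit
    (Matrix.of fun (i : {i // i ∈ I}) (j : {j // j ∈ J}) => A i.1 j.1) hli
  set k := I.card with hk
  have hkpos : 0 < k := Finset.card_pos.2 hIne
  set eI : Fin k ≃ {i // i ∈ I} := I.equivFin.symm with heI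
  set ρ : Fin k → Fin m := fun a => (eI a).1 with hρ
  set σ : Fin k → Fin n := fun a => (τ (eI a)).1 with hσ
  have hρinj : Function.Injective ρ := fun a b hab => eI.injective (Subtype.ext hab)
  have hσinj : Function.Injective σ := fun a b hab =>
    eI.injective (hτinj (Subtype.ext hab))
  set B : Matrix (Fin k) (Fin k) ℝ := A.submatrix ρ σ with hB
  have hBdet : IsUnit B.det := by
    have : B = ((Matrix.of fun (i : {i // i ∈ I}) (j : {j // j ∈ J}) =>
        A i.1 j.1).submatrix id τ).submatrix eI eI := by
      ext a b; rfl
    rw [this, Matrix.det_submatrix_equiv_self]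
    exact hτdet
  -- transfer sums over I to sums over Fin k
  have htrans : ∀ F : Fin m → ℝ, (∀ i, i ∉ I → F i = 0) → ∑ i, F i = ∑ a, F (ρ a) := by
    intro F hF
    rw [← Finset.sum_subset (Finset.subset_univ I) (fun i _ hi => hF i hi)]
    rw [← Finset.sum_coe_sort I F]
    exact (Equiv.sum_comp eI (fun i => F i.1)).symm
  set wz : Fin k → ℝ := fun a => z (ρ a) with hwz
  have hwz1 : ∀ b, vecMul wz B b = 1 := by
    intro b
    have hmem : (σ b) ∈ J := (τ (eI b)).2
    have h1 : vecMul z A (σ b) = 1 := by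
      have := Finset.mem_filter.1 hmem
      exact this.2
    rw [show vecMul wz B b = ∑ a, z (ρ a) * A (ρ a) (σ b) from rfl]
    rw [← htrans (fun i => z i * A i (σ b)) (fun i hi => by
      have hz0' : z i = 0 := by
        by_contra hzi
        exact hi (Finset.mem_filter.2 ⟨Finset.mem_univ i, hzi⟩)
      show z i * A i (σ b) = 0
      rw [hz0', zero_mul])]
    exact h1
  have hwzsum : ∑ a, wz a = 1/v := by
    rw [show ∑ a, wz a = ∑ a, z (ρ a) from rfl]
    rw [← htrans z (fun i hi => by
      by_contra hzi
      exact hi (Finset.mem_filter.2 ⟨Finset.mem_univ i, hzi⟩))]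
    exact hzsum
  -- the adjugate computation
  have hadj : ∀ a, B.det * wz a = ∑ b, B.adjugate b a := by
    intro a
    have hc1 : vecMul wz (B * B.adjugate) a = B.det * wz a := by
      rw [Matrix.mul_adjugate]
      rw [show vecMul wz (B.det • (1 : Matrix (Fin k) (Fin k) ℝ)) a
        = ∑ c, wz c * (B.det • (1 : Matrix (Fin k) (Fin k) ℝ)) c a from rfl]
      simp [Matrix.smul_apply, Matrix.one_apply, mul_ite, Finset.sum_ite_eq', mul_comm]
    have hc2 : vecMul wz (B * B.adjugate) a = ∑ b, B.adjugate b a := by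
      rw [← Matrix.vecMul_vecMul]
      rw [show vecMul (vecMul wz B) B.adjugate a
        = ∑ b, vecMul wz B b * B.adjugate b a from rfl]
      simp only [hwz1, one_mul]
    rw [← hc1, hc2]
  have hSig : ∑ i, ∑ j, B.adjugate j i = B.det / v := by
    have h6 : (∑ i, ∑ j, B.adjugate j i) = ∑ a, B.det * wz a :=
      Finset.sum_congr rfl fun a _ => (hadj a).symm
    rw [h6, ← Finset.mul_sum, hwzsum]
    ring
  refine ⟨k, hkpos, ρ, σ, hρinj, hσinj, hBdet, ?_⟩
  rw [← hB, hSig]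
  have hdet0 : B.det ≠ 0 := hBdet.ne_zero
  field_simp

lemma kernel_of_ne_zero {v : ℝ} (hv : v ≠ 0) (A : Matrix (Fin m) (Fin n) ℝ)
    {x : Fin m → ℝ} (hx : x ∈ stdSimplex ℝ (Fin m)) (hxA : ∀ j, v ≤ vecMul x A j)
    {y : Fin n → ℝ} (hy : y ∈ stdSimplex ℝ (Fin n)) (hAy : ∀ i, A.mulVec y i ≤ v) :
    ∃ (k : ℕ) (_ : 0 < k) (ρ : Fin k → Fin m) (σ : Fin k → Fin n),
      Function.Injective ρ ∧ Function.Injective σ ∧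
      IsUnit (A.submatrix ρ σ).det ∧
      v = (A.submatrix ρ σ).det / (∑ i, ∑ j, (A.submatrix ρ σ).adjugate j i) := by
  rcases hv.lt_or_gt with hneg | hpos
  · -- v < 0 : pass to the game -Aᵀ whose value is -v
    set A' : Matrix (Fin n) (Fin m) ℝ := -Aᵀ with hA'
    have hx' : ∀ j : Fin m, -v ≤ vecMul y A' j := by
      intro j
      have he : vecMul y A' j = -(A.mulVec y j) := by
        simp [hA', vecMul, mulVec, dotProduct, Matrix.transpose_apply, mul_comm,
          Finset.sum_neg_distrib]
      rw [he]
      linarith [hAy j]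
    have hy' : ∀ i : Fin n, A'.mulVec x i ≤ -v := by
      intro i
      have he : A'.mulVec x i = -(vecMul x A i) := by
        simp [hA', vecMul, mulVec, dotProduct, Matrix.transpose_apply, mul_comm,
          Finset.sum_neg_distrib]
      rw [he]
      linarith [hxA i]
    obtain ⟨k, hk, ρ, σ, hρ, hσ, hdet, heq⟩ :=
      kernel_of_pos (neg_pos.2 hneg) A' hy hx' hx hy'
    refine ⟨k, hk, σ, ρ, hσ, hρ, ?_, ?_⟩
    · set B : Matrix (Fin k) (Fin k) ℝ := A.submatrix σ ρ with hB
      have hB' : A'.submatrix ρ σ = (-1 : ℝ) • Bᵀ := by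
        ext a b
        simp [hA', hB, Matrix.submatrix_apply, Matrix.transpose_apply]
      rw [hB', Matrix.det_smul, Matrix.det_transpose] at hdet
      rcases hdet with ⟨u, hu⟩
      refine isUnit_iff_ne_zero.2 fun h0 => ?_
      rw [h0, mul_zero] at hu
      exact u.ne_zero hu
    · set B : Matrix (Fin k) (Fin k) ℝ := A.submatrix σ ρ with hB
      have hB' : A'.submatrix ρ σ = (-1 : ℝ) • Bᵀ := by
        ext a b
        simp [hA', hB, Matrix.submatrix_apply, Matrix.transpose_apply]
      set S : ℝ := ∑ i, ∑ j, B.adjugate j i with hS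
      have hdet2 : (A'.submatrix ρ σ).det = (-1:ℝ)^k * B.det := by
        rw [hB', Matrix.det_smul, Matrix.det_transpose]
        norm_num
      have hadj2 : ∑ i, ∑ j, (A'.submatrix ρ σ).adjugate j i = (-1:ℝ)^(k-1) * S := by
        rw [hB']
        have h1 : ((-1:ℝ) • Bᵀ).adjugate = (-1:ℝ)^(k-1) • Bᵀ.adjugate := by
          rw [Matrix.adjugate_smul, Fintype.card_fin]
        rw [h1, ← Matrix.adjugate_transpose]
        simp only [Matrix.smul_apply, Matrix.transpose_apply, smul_eq_mul, ← Finset.mul_sum]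
        rw [hS]
        congr 1
        exact Finset.sum_comm
      rw [hdet2, hadj2] at heq
      have hk1 : k = (k - 1) + 1 := (Nat.succ_pred_eq_of_pos hk).symm
      have hpow : (-1:ℝ)^k = (-1:ℝ)^(k-1) * (-1) := by
        conv_lhs => rw [hk1]
        rw [pow_succ]
      rw [hpow] at heq
      have hne : ((-1:ℝ)^(k-1)) ≠ 0 := pow_ne_zero _ (by norm_num)
      have heq2 : -v = -(B.det / S) := by
        rw [heq]
        rw [show (-1:ℝ)^(k-1) * -1 * B.det = (-1:ℝ)^(k-1) * (-B.det) by ring]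
        rw [mul_div_mul_left _ _ hne, neg_div]
      have : v = B.det / S := by linarith [heq2]
      rw [hB, hS] at this
      exact this
  · exact kernel_of_pos hpos A hx hxA hy hAy

end SSAux

/-- Reduction of Shapley's fixed-point equation to a Shapley–Snow kernel: if the
value `v_s(β)` of state `s` is nonzero, then the auxiliary game `R_β(s, v(β))` has a
square invertible submatrix `R̄` with `v_s(β) = det(R̄)/Σ_{ij} R̄^{ij}`, where the
`(i,j)`-th cofactor `R̄^{ij}` equals `adjugate R̄ j i`. -/
theorem discounted_value_kernel_representation {N : ℕ} (hN : 0 < N) (m n : Fin N → ℕ)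
    (hm : ∀ s, 0 < m s) (hn : ∀ s, 0 < n s)
    (r : (s : Fin N) → Fin (m s) → Fin (n s) → ℝ)
    (p : (s : Fin N) → Fin (m s) → Fin (n s) → Fin N → ℝ)
    (hp : ∀ s a b s', 0 ≤ p s a b s') (hp1 : ∀ s a b, ∑ s', p s a b s' = 1)
    (β : ℝ) (hβ : β ∈ Set.Ioo (0 : ℝ) 1)
    (v : Fin N → ℝ) (hv : ∀ s, v s = matrixVal (shapleyMatrix r p β s v))
    (s : Fin N) (hs : v s ≠ 0) :
    ∃ (k : ℕ) (_ : 0 < k) (ρ : Fin k → Fin (m s)) (σ : Fin k → Fin (n s)),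
      Function.Injective ρ ∧ Function.Injective σ ∧
      IsUnit ((shapleyMatrix r p β s v).submatrix ρ σ).det ∧
      v s = ((shapleyMatrix r p β s v).submatrix ρ σ).det /
        (∑ i, ∑ j, ((shapleyMatrix r p β s v).submatrix ρ σ).adjugate j i) := by
  obtain ⟨x, hx, hxA⟩ := (SSAux.exists_x_optimal (hm s) (hn s) (shapleyMatrix r p β s v)).1
  obtain ⟨y, hy, hAy⟩ := SSAux.exists_y_optimal (hm s) (hn s) (shapleyMatrix r p β s v)
  rw [← hv s] at hxA hAy
  exact SSAux.kernel_of_ne_zero hs (shapleyMatrix r p β s v) hx hxA hy hAy
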